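/- arXiv:1406.0450 — 2 statements merged into one kernel-verified Lean document; each statement's English description precedes it below -/
import Mathlib

section
/- Let m ≥ 2 be an integer and define the sequence L by L(2) = 2m+1 and the recursive bound: for i ≥ 2, L(i+1) ≤ m^(L(i)) · (L(i)+1) + L(i). Then for all i ≥ 2, L(i) < m↑↑(2i−1), where ↑↑ denotes tetration (x↑↑1 = x, x↑↑(n+1) = x^(x↑↑n)). -/
def tet (x : ℕ) : ℕ → ℕ
  | 0 => 1
  | n + 1 => x ^ tet x n

lemma tet_pos {m : ℕ} (hm : 1 ≤ m) (k : ℕ) : 0 < tet m k := by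
  cases k with
  | zero => simp [tet]
  | succ n => exact Nat.pow_pos (by omega)

lemma le_tet {m : ℕ} (hm : 1 ≤ m) {k : ℕ} (hk : 1 ≤ k) : m ≤ tet m k := by
  obtain ⟨j, rfl⟩ : ∃ j, k = j + 1 := ⟨k - 1, by omega⟩
  show m ≤ m ^ tet m j
  calc m = m ^ 1 := (pow_one m).symm
    _ ≤ m ^ tet m j := Nat.pow_le_pow_right hm (tet_pos hm j)

lemma two_mul_le_pow {m T : ℕ} (hm : 2 ≤ m) (hT : 2 ≤ T) : 2 * T ≤ m ^ T := by
  have h1 : T - 1 < 2 ^ (T - 1) := Nat.lt_two_pow_self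
  have h2 : 2 * 2 ^ (T - 1) = 2 ^ T := by
    rw [← pow_succ']
    congr 1
    omega
  have h3 : 2 ^ T ≤ m ^ T := Nat.pow_le_pow_left hm T
  omega

theorem stmt_2 (m : ℕ) (hm : 2 ≤ m) (L : ℕ → ℕ)
    (hL2 : L 2 = 2 * m + 1)
    (hrec : ∀ i : ℕ, 2 ≤ i → L (i + 1) ≤ m ^ (L i) * (L i + 1) + L i) :
    ∀ i : ℕ, 2 ≤ i → L i < tet m (2 * i - 1) := by
  intro i hi
  induction i with
  | zero => omega
  | succ n ih =>
    rcases Nat.lt_or_ge n 2 with h | h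
    · -- base case: n = 1, i = 2
      have hn : n = 1 := by omega
      subst hn
      have heq : tet m (2 * 2 - 1) = m ^ m ^ m := by
        show tet m 3 = _
        simp [tet, pow_one]
      rw [heq, hL2]
      have h4 : 4 ≤ m ^ m := by
        calc 4 = 2 * 2 := by norm_num
          _ ≤ m * m := Nat.mul_le_mul hm hm
          _ = m ^ 2 := (sq m).symm
          _ ≤ m ^ m := Nat.pow_le_pow_right (by omega) hm
      have h8 : 8 * m ≤ m ^ 4 := by
        calc 8 * m = 2 * 2 * 2 * m := by ring
          _ ≤ m * m * m * m :=
            Nat.mul_le_mul (Nat.mul_le_mul (Nat.mul_le_mul hm hm) hm) le_rfl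
          _ = m ^ 4 := by ring
      calc 2 * m + 1 < m ^ 4 := by omega
        _ ≤ m ^ m ^ m := Nat.pow_le_pow_right (by omega) h4
    · -- inductive step
      have hT := ih h
      set T := tet m (2 * n - 1) with hTdef
      have hT2 : 2 ≤ T := le_trans hm (le_tet (by omega) (by omega))
      have h2T : 2 * T ≤ m ^ T := two_mul_le_pow hm hT2
      have hTm : T ≤ m ^ T := by omega
      have heq : tet m (2 * (n + 1) - 1) = m ^ m ^ T := by
        have h1 : 2 * (n + 1) - 1 = (2 * n - 1) + 1 + 1 := by omega
        rw [h1]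
        rfl
      rw [heq]
      have hpow : m ^ (T - 1) * m = m ^ T := by
        rw [← pow_succ]
        congr 1
        omega
      calc L (n + 1) ≤ m ^ (L n) * (L n + 1) + L n := hrec n h
        _ ≤ m ^ (T - 1) * T + (T - 1) :=
            Nat.add_le_add
              (Nat.mul_le_mul (Nat.pow_le_pow_right (by omega) (by omega)) (by omega))
              (by omega)
        _ < m ^ (T - 1) * T + m ^ (T - 1) * T := by
            have hpos : 1 ≤ m ^ (T - 1) := Nat.one_le_pow _ _ (by omega)
            have : T - 1 < m ^ (T - 1) * T := by
              calc T - 1 < T := by omega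
                _ = 1 * T := (one_mul T).symm
                _ ≤ m ^ (T - 1) * T := Nat.mul_le_mul_right T hpos
            omega
        _ = 2 * m ^ (T - 1) * T := by ring
        _ ≤ m * m ^ (T - 1) * T := Nat.mul_le_mul_right T (Nat.mul_le_mul_right _ hm)
        _ = m ^ T * T := by rw [mul_comm m, hpow]
        _ ≤ m ^ T * m ^ T := Nat.mul_le_mul_left _ hTm
        _ = m ^ (T + T) := (pow_add m T T).symm
        _ ≤ m ^ (m ^ T) := Nat.pow_le_pow_right (by omega) (by omega)
end

section
/- For integers m ≥ 2 and j ≥ 2 and real u > 0, one has −log(m+u) < −(1/j)·log(m(1+u)^j − (m−1)u^j). -/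
lemma key_ineq (M : ℝ) (hM : 2 ≤ M) (u : ℝ) (hu : 0 < u) :
    ∀ j : ℕ, 2 ≤ j → M * (1 + u) ^ j - (M - 1) * u ^ j < (M + u) ^ j := by
  intro j hj
  induction j, hj using Nat.le_induction with
  | base =>
    have h1 : M < M ^ 2 := by nlinarith
    ring_nf
    nlinarith
  | succ n hn ih =>
    have hA : M * (1 + u) ^ n - (M - 1) * u ^ n < (M + u) ^ n := ih
    have h1u : (0:ℝ) < 1 + u := by linarith
    have hun : u ^ n < (M + u) ^ n := by
      apply pow_lt_pow_left₀ <;> linarith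
    have hstep : M * (1 + u) ^ (n + 1) - (M - 1) * u ^ (n + 1)
        = (1 + u) * (M * (1 + u) ^ n - (M - 1) * u ^ n) + (M - 1) * u ^ n := by
      ring
    rw [hstep, pow_succ]
    have h2 : (1 + u) * (M * (1 + u) ^ n - (M - 1) * u ^ n) < (1 + u) * (M + u) ^ n :=
      (mul_lt_mul_iff_right₀ h1u).mpr hA
    have h3 : (M - 1) * u ^ n < (M - 1) * (M + u) ^ n := by
      apply (mul_lt_mul_iff_right₀ (by linarith)).mpr hun
    nlinarith

theorem stmt_17 (m j : ℕ) (hm : 2 ≤ m) (hj : 2 ≤ j) (u : ℝ) (hu : 0 < u) :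
    -Real.log (m + u) <
      -(1 / j) * Real.log (m * (1 + u) ^ j - (m - 1) * u ^ j) := by
  have hM : (2:ℝ) ≤ (m:ℝ) := by exact_mod_cast hm
  have hJ : (0:ℝ) < (j:ℝ) := by positivity
  set A : ℝ := (m:ℝ) * (1 + u) ^ j - ((m:ℝ) - 1) * u ^ j with hAdef
  have hupow : u ^ j < (1 + u) ^ j := by
    apply pow_lt_pow_left₀ <;> linarith
  have hA0 : 0 < A := by
    have : ((m:ℝ) - 1) * u ^ j < (m:ℝ) * (1 + u) ^ j := by
      have h1 : ((m:ℝ) - 1) * u ^ j < (m:ℝ) * u ^ j := by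
        have : (0:ℝ) < u ^ j := by positivity
        nlinarith
      have h2 : (m:ℝ) * u ^ j < (m:ℝ) * (1 + u) ^ j := by
        apply (mul_lt_mul_iff_right₀ (by linarith)).mpr hupow
      linarith
    simpa [hAdef] using sub_pos.mpr this
  have hA : A < ((m:ℝ) + u) ^ j := key_ineq (m:ℝ) hM u hu j hj
  have hlog : Real.log A < (j:ℝ) * Real.log ((m:ℝ) + u) := by
    have := Real.log_lt_log hA0 hA
    rwa [Real.log_pow] at this
  have hdiv : (1 / (j:ℝ)) * Real.log A < Real.log ((m:ℝ) + u) := by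
    rw [div_mul_eq_mul_div, one_mul, div_lt_iff₀ hJ]
    linarith [hlog]
  linarith
end
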